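/- Let a, b, c : ℝ → ℝ, let T > 0, and let x, x₁, x₂, x₃ : ℝ → ℝ be differentiable functions each satisfying the Riccati equation y'(t) = a(t) + b(t)·y(t) + c(t)·y(t)² for all t ∈ ℝ. Assume x₁, x₂, x₃ are T-periodic (xᵢ(t + T) = xᵢ(t) for all t) and that at every t ∈ ℝ the four values x(t), x₁(t), x₂(t), x₃(t) are pairwise distinct. Then x is T-periodic: x(t + T) = x(t) for all t ∈ ℝ. -/

import Mathlib

/-- If a real Riccati equation has three `T`-periodic particular solutions, then any
further solution staying pairwise distinct from them is also `T`-periodic. -/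
theorem riccati_periodic_of_three_periodic_solutions
    (a b c x x₁ x₂ x₃ : ℝ → ℝ) (T : ℝ) (hT : 0 < T)
    (hx : ∀ t, HasDerivAt x (a t + b t * x t + c t * (x t) ^ 2) t)
    (h₁ : ∀ t, HasDerivAt x₁ (a t + b t * x₁ t + c t * (x₁ t) ^ 2) t)
    (h₂ : ∀ t, HasDerivAt x₂ (a t + b t * x₂ t + c t * (x₂ t) ^ 2) t)
    (h₃ : ∀ t, HasDerivAt x₃ (a t + b t * x₃ t + c t * (x₃ t) ^ 2) t)
    (hp₁ : ∀ t, x₁ (t + T) = x₁ t)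
    (hp₂ : ∀ t, x₂ (t + T) = x₂ t)
    (hp₃ : ∀ t, x₃ (t + T) = x₃ t)
    (hdist : ∀ t, [x t, x₁ t, x₂ t, x₃ t].Pairwise (· ≠ ·)) :
    ∀ t, x (t + T) = x t := by
  -- extract pairwise distinctness
  have hd : ∀ t, x t ≠ x₁ t ∧ x t ≠ x₂ t ∧ x t ≠ x₃ t ∧ x₁ t ≠ x₂ t ∧
      x₁ t ≠ x₃ t ∧ x₂ t ≠ x₃ t := by
    intro t
    have := hdist t
    simp [List.pairwise_cons] at this
    tauto
  set F : ℝ → ℝ := fun t => (x t - x₂ t) * (x₁ t - x₃ t) with hF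
  set G : ℝ → ℝ := fun t => (x t - x₃ t) * (x₁ t - x₂ t) with hG
  have hGne : ∀ t, G t ≠ 0 := by
    intro t
    obtain ⟨_, _, h3, h4, _, _⟩ := hd t
    exact mul_ne_zero (sub_ne_zero.mpr h3) (sub_ne_zero.mpr h4)
  set q : ℝ → ℝ := fun t => F t / G t with hq
  have hq0 : ∀ t, HasDerivAt q 0 t := by
    intro t
    have hFd : HasDerivAt F
        (((a t + b t * x t + c t * (x t) ^ 2) - (a t + b t * x₂ t + c t * (x₂ t) ^ 2)) *
          (x₁ t - x₃ t) + (x t - x₂ t) *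
          ((a t + b t * x₁ t + c t * (x₁ t) ^ 2) - (a t + b t * x₃ t + c t * (x₃ t) ^ 2))) t :=
      ((hx t).sub (h₂ t)).mul ((h₁ t).sub (h₃ t))
    have hGd : HasDerivAt G
        (((a t + b t * x t + c t * (x t) ^ 2) - (a t + b t * x₃ t + c t * (x₃ t) ^ 2)) *
          (x₁ t - x₂ t) + (x t - x₃ t) *
          ((a t + b t * x₁ t + c t * (x₁ t) ^ 2) - (a t + b t * x₂ t + c t * (x₂ t) ^ 2))) t :=
      ((hx t).sub (h₃ t)).mul ((h₁ t).sub (h₂ t))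
    have := hFd.div hGd (hGne t)
    refine this.congr_deriv (Eq.symm ?_)
    rw [eq_comm, div_eq_zero_iff]
    left
    simp only [hF, hG]
    ring
  have hconst : ∀ s t : ℝ, q s = q t := by
    intro s t
    exact is_const_of_deriv_eq_zero (fun u => (hq0 u).differentiableAt)
      (fun u => (hq0 u).deriv) s t
  intro t
  have hqeq : q (t + T) = q t := hconst (t + T) t
  simp only [hq, hF, hG, hp₁, hp₂, hp₃] at hqeq
  have hGper : (x (t + T) - x₃ t) * (x₁ t - x₂ t) ≠ 0 := by
    have := hGne (t + T)
    simpa only [hG, hp₁, hp₂, hp₃] using this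
  have hcross : (x (t + T) - x₂ t) * (x₁ t - x₃ t) * ((x t - x₃ t) * (x₁ t - x₂ t)) =
      (x t - x₂ t) * (x₁ t - x₃ t) * ((x (t + T) - x₃ t) * (x₁ t - x₂ t)) := by
    have h1 : (x (t + T) - x₃ t) * (x₁ t - x₂ t) ≠ 0 := hGper
    have h2 : (x t - x₃ t) * (x₁ t - x₂ t) ≠ 0 := hGne t
    rw [div_eq_div_iff h1 h2] at hqeq
    linarith [hqeq]
  obtain ⟨_, _, _, h4, h5, h6⟩ := hd t
  have key : (x (t + T) - x t) *
      ((x₁ t - x₂ t) * (x₁ t - x₃ t) * (x₂ t - x₃ t)) = 0 := by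
    linear_combination hcross
  rcases mul_eq_zero.mp key with h | h
  · linarith [sub_eq_zero.mp h]
  · exact absurd h (by
      exact mul_ne_zero (mul_ne_zero (sub_ne_zero.mpr h4) (sub_ne_zero.mpr h5))
        (sub_ne_zero.mpr h6))
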